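/- Let $(a_n)$ and $(b_n)$ be strictly increasing sequences of positive integers with $L_n = b_n/a_n \to L = p/q$, where $p, q \in \mathbb{N}$ are relatively prime, and set $\delta_n = L_n - L$. Suppose $\delta_n < 0$ for all $n$ and $a_n |\delta_n| \to k \in (0, \infty)$. Then for every $m \in \mathbb{Z}$ and every $t > 0$, $\frac{1}{a_n} \sum_{j=1}^{\lfloor a_n t \rfloor} \widehat{f}_{m,L}(j L_n) \to \frac{1}{q} \sum_{\eta=1}^{q} \frac{1}{k} \int_0^{k t} \widehat{f}_{m,L}(\eta L - x)\, dx$ as $n \to \infty$. -/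

import Mathlib

open Filter MeasureTheory

/-- `f_{m,L}(x) = (|x-m+1|^{1/3} + |x-m-L|^{1/3} - |x-m|^{1/3} - |x-m+1-L|^{1/3})^3`. -/
noncomputable def fmL (L : ℝ) (m : ℤ) (x : ℝ) : ℝ :=
  (|x - m + 1| ^ ((1 : ℝ) / 3) + |x - m - L| ^ ((1 : ℝ) / 3)
    - |x - m| ^ ((1 : ℝ) / 3) - |x - m + 1 - L| ^ ((1 : ℝ) / 3)) ^ 3

/-- `f̂_{m,L}(x) = f_{m,L}({x})`, where `{x}` is the fractional part of `x`. -/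
noncomputable def fmLhat (L : ℝ) (m : ℤ) (x : ℝ) : ℝ := fmL L m (Int.fract x)

lemma cont_cube_abs (c : ℝ) : Continuous (fun x : ℝ => |x - c| ^ ((1:ℝ)/3)) := by
  apply continuous_iff_continuousAt.2
  intro x
  exact (Real.continuousAt_rpow_const _ _ (Or.inr (by norm_num))).comp
    ((continuous_abs.comp (continuous_id.sub continuous_const)).continuousAt)

lemma cont_fmL (L : ℝ) (m : ℤ) : Continuous (fmL L m) := by
  have h1 : ∀ c : ℝ, Continuous (fun x : ℝ => |x - c| ^ ((1:ℝ)/3)) := cont_cube_abs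
  have key : Continuous fun x : ℝ =>
      (|x - ((m:ℝ)-1)|^((1:ℝ)/3) + |x - ((m:ℝ)+L)|^((1:ℝ)/3) - |x - (m:ℝ)|^((1:ℝ)/3)
        - |x - ((m:ℝ)+L-1)|^((1:ℝ)/3))^3 :=
    ((((h1 _).add (h1 _)).sub (h1 _)).sub (h1 _)).pow 3
  have : fmL L m = fun x : ℝ =>
      (|x - ((m:ℝ)-1)|^((1:ℝ)/3) + |x - ((m:ℝ)+L)|^((1:ℝ)/3) - |x - (m:ℝ)|^((1:ℝ)/3)
        - |x - ((m:ℝ)+L-1)|^((1:ℝ)/3))^3 := by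
    funext x; unfold fmL; ring_nf
  rw [this]; exact key

lemma meas_fmLhat (L : ℝ) (m : ℤ) : Measurable (fmLhat L m) :=
  (cont_fmL L m).measurable.comp measurable_fract

lemma fmLhat_bound (L : ℝ) (m : ℤ) : ∃ C : ℝ, 0 ≤ C ∧ ∀ x, |fmLhat L m x| ≤ C := by
  obtain ⟨C, hC⟩ := (isCompact_Icc (a := (0:ℝ)) (b := 1)).exists_bound_of_continuousOn
    (cont_fmL L m).continuousOn
  refine ⟨max C 0, le_max_right _ _, fun x => ?_⟩
  have hx : Int.fract x ∈ Set.Icc (0:ℝ) 1 :=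
    ⟨Int.fract_nonneg x, (Int.fract_lt_one x).le⟩
  calc |fmLhat L m x| = ‖fmL L m (Int.fract x)‖ := rfl
    _ ≤ C := hC _ hx
    _ ≤ max C 0 := le_max_left _ _

lemma fmLhat_int_add (L : ℝ) (m : ℤ) (x : ℝ) (z : ℤ) :
    fmLhat L m (x + z) = fmLhat L m x := by
  unfold fmLhat; rw [Int.fract_add_intCast]

lemma contAt_fmLhat (L : ℝ) (m : ℤ) (z : ℝ) (hz : Int.fract z ≠ 0) :
    ContinuousAt (fmLhat L m) z := by
  have h1 : (⌊z⌋ : ℝ) < z := by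
    rcases lt_or_eq_of_le (Int.floor_le z) with h | h
    · exact h
    · exact absurd (by rw [Int.fract, ← h, Int.floor_intCast, sub_self]) hz
  have h2 : z < (⌊z⌋ : ℝ) + 1 := Int.lt_floor_add_one z
  have hev : (fun y => fmL L m (y - ⌊z⌋)) =ᶠ[nhds z] fmLhat L m := by
    filter_upwards [Ioo_mem_nhds h1 h2] with y hy
    unfold fmLhat
    congr 1
    rw [eq_comm, Int.fract_eq_iff]
    exact ⟨by linarith [hy.1], by linarith [hy.2], ⟨⌊z⌋, by ring⟩⟩
  exact ContinuousAt.congr (((cont_fmL L m).comp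
    (continuous_id.sub continuous_const)).continuousAt) hev

lemma II_of_bdd {f : ℝ → ℝ} (hf : Measurable f) {C : ℝ} (hC : ∀ x, |f x| ≤ C) (a b : ℝ) :
    IntervalIntegrable f volume a b := by
  rw [intervalIntegrable_iff]
  have hfin : volume (Set.uIoc a b) < ⊤ := by rw [Set.uIoc]; exact measure_Ioc_lt_top
  refine MeasureTheory.Integrable.mono' (g := fun _ => C)
    (integrableOn_const hfin.ne) hf.aestronglyMeasurable.restrict ?_
  exact ae_of_all _ fun x => by simpa using hC x

lemma step_meas {h : ℝ → ℝ} (hmeas : Measurable h) (Δ off : ℝ) :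
    Measurable fun x : ℝ => h ((⌊x / Δ⌋ : ℝ) * Δ + off) :=
  hmeas.comp ((((measurable_from_top).comp
    (Int.measurable_floor.comp (measurable_id.div_const Δ))).mul_const Δ).add_const off)

lemma step_sum_integral (h : ℝ → ℝ) (hmeas : Measurable h) (C : ℝ) (hbdd : ∀ x, |h x| ≤ C)
    (Δ off : ℝ) (hΔ : 0 < Δ) (M : ℕ) :
    ∫ x in (0:ℝ)..((M : ℝ) * Δ), h ((⌊x / Δ⌋ : ℝ) * Δ + off)
      = Δ * ∑ i ∈ Finset.range M, h ((i : ℝ) * Δ + off) := by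
  induction M with
  | zero => simp
  | succ M ih =>
    have hint : ∀ u v : ℝ, IntervalIntegrable
        (fun x : ℝ => h ((⌊x / Δ⌋ : ℝ) * Δ + off)) volume u v := fun u v =>
      II_of_bdd (step_meas hmeas Δ off) (fun x => hbdd _) u v
    have hsplit := intervalIntegral.integral_add_adjacent_intervals
      (hint 0 ((M : ℝ) * Δ)) (hint ((M : ℝ) * Δ) (((M : ℝ) + 1) * Δ))
    have hlast : ∫ x in ((M : ℝ) * Δ)..(((M : ℝ) + 1) * Δ), h ((⌊x / Δ⌋ : ℝ) * Δ + off)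
        = Δ * h ((M : ℝ) * Δ + off) := by
      have hab : (M : ℝ) * Δ ≤ ((M : ℝ) + 1) * Δ := by nlinarith
      have hcongr : ∫ x in ((M : ℝ) * Δ)..(((M : ℝ) + 1) * Δ), h ((⌊x / Δ⌋ : ℝ) * Δ + off)
          = ∫ _x in ((M : ℝ) * Δ)..(((M : ℝ) + 1) * Δ), h ((M : ℝ) * Δ + off) := by
        apply intervalIntegral.integral_congr_ae
        have hne : ∀ᵐ x : ℝ, x ≠ ((M : ℝ) + 1) * Δ :=
          compl_mem_ae_iff.mpr (measure_singleton _)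
        filter_upwards [hne] with x hx hmem
        rw [Set.uIoc_of_le hab] at hmem
        have hx1 : (M : ℝ) * Δ < x := hmem.1
        have hx2 : x < ((M : ℝ) + 1) * Δ := lt_of_le_of_ne hmem.2 hx
        have hfl : ⌊x / Δ⌋ = (M : ℤ) := by
          rw [Int.floor_eq_iff]
          constructor
          · push_cast; rw [le_div_iff₀ hΔ]; nlinarith
          · push_cast; rw [div_lt_iff₀ hΔ]; nlinarith
        rw [hfl]; norm_num
      rw [hcongr, intervalIntegral.integral_const, smul_eq_mul]
      ring_nf
    have hcast : ((M + 1 : ℕ) : ℝ) = (M : ℝ) + 1 := by push_cast; ring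
    rw [hcast, ← hsplit, ih, hlast, Finset.sum_range_succ]
    ring

lemma riemann_lim (h : ℝ → ℝ) (hmeas : Measurable h) (C : ℝ) (hbdd : ∀ x, |h x| ≤ C)
    (hcont : ∀ᵐ x : ℝ, ContinuousAt h x)
    (A : ℕ → ℝ) (hA : Tendsto A atTop atTop) (hApos : ∀ n, 0 < A n)
    (c : ℝ) (hc : 0 < c) (off : ℕ → ℝ) (hoff1 : ∀ n, 0 ≤ off n)
    (hoff2 : ∀ n, off n ≤ c / A n)
    (M : ℕ → ℕ) (B : ℝ)
    (hM : Tendsto (fun n => (M n : ℝ) * (c / A n)) atTop (nhds B)) :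
    Tendsto (fun n => (1 / A n) * ∑ i ∈ Finset.range (M n), h ((i : ℝ) * (c / A n) + off n))
      atTop (nhds ((1 / c) * ∫ x in (0:ℝ)..B, h x)) := by
  set Δ : ℕ → ℝ := fun n => c / A n with hΔdef
  have hΔ : ∀ n, 0 < Δ n := fun n => div_pos hc (hApos n)
  have hΔ0 : Tendsto Δ atTop (nhds 0) := by
    simpa [hΔdef, div_eq_mul_inv] using (tendsto_inv_atTop_zero.comp hA).const_mul c
  set s : ℕ → ℝ → ℝ := fun n x => h ((⌊x / Δ n⌋ : ℝ) * Δ n + off n) with hsdef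
  have hsmeas : ∀ n, Measurable (s n) := fun n => step_meas hmeas _ _
  have hsbdd : ∀ n x, |s n x| ≤ C := fun n x => hbdd _
  have hsint : ∀ n (u v : ℝ), IntervalIntegrable (s n) volume u v := fun n u v =>
    II_of_bdd (hsmeas n) (hsbdd n) u v
  have key : ∀ n, (1 / A n) * ∑ i ∈ Finset.range (M n), h ((i : ℝ) * Δ n + off n)
      = (1 / c) * ∫ x in (0:ℝ)..((M n : ℝ) * Δ n), s n x := by
    intro n
    rw [step_sum_integral h hmeas C hbdd (Δ n) (off n) (hΔ n)]
    have hA0 : A n ≠ 0 := ne_of_gt (hApos n)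
    have hc0 : c ≠ 0 := ne_of_gt hc
    rw [← mul_assoc]; congr 1; simp only [hΔdef]; field_simp
    try ring
  refine Tendsto.congr (fun n => (key n).symm) ?_
  have hsplit : ∀ n, ∫ x in (0:ℝ)..((M n : ℝ) * Δ n), s n x
      = (∫ x in (0:ℝ)..B, s n x) + ∫ x in B..((M n : ℝ) * Δ n), s n x := fun n =>
    (intervalIntegral.integral_add_adjacent_intervals (hsint n 0 B)
      (hsint n B _)).symm
  simp only [hsplit]
  have hCnonneg : 0 ≤ C := le_trans (abs_nonneg _) (hbdd 0)
  have hterm2 : Tendsto (fun n => ∫ x in B..((M n : ℝ) * Δ n), s n x) atTop (nhds 0) := by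
    apply squeeze_zero_norm (a := fun n => C * |(M n : ℝ) * Δ n - B|)
    · intro n
      exact intervalIntegral.norm_integral_le_of_norm_le_const
        (fun x _ => by simpa using hsbdd n x)
    · have : Tendsto (fun n => (M n : ℝ) * Δ n - B) atTop (nhds 0) := by
        simpa using hM.sub_const B
      simpa using (this.abs.const_mul C)
  have hterm1 : Tendsto (fun n => ∫ x in (0:ℝ)..B, s n x) atTop
      (nhds (∫ x in (0:ℝ)..B, h x)) := by
    apply intervalIntegral.tendsto_integral_filter_of_dominated_convergence
      (fun _ => C)
    · exact Eventually.of_forall fun n => (hsmeas n).aestronglyMeasurable.restrict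
    · exact Eventually.of_forall fun n => ae_of_all _ fun x _ => by simpa using hsbdd n x
    · exact intervalIntegrable_const
    · filter_upwards [hcont] with x hx
      intro _
      apply hx.tendsto.comp
      have hdiff : Tendsto (fun n => ((⌊x / Δ n⌋ : ℝ) * Δ n + off n) - x) atTop (nhds 0) := by
        apply squeeze_zero_norm (a := fun n => 2 * Δ n)
        · intro n
          have h1 : (⌊x / Δ n⌋ : ℝ) ≤ x / Δ n := Int.floor_le _
          have h2 : x / Δ n - 1 < (⌊x / Δ n⌋ : ℝ) := by
            have := Int.lt_floor_add_one (x / Δ n); linarith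
          have hΔn := hΔ n
          have e1 : (⌊x / Δ n⌋ : ℝ) * Δ n ≤ x := by
            have := mul_le_mul_of_nonneg_right h1 hΔn.le
            rwa [div_mul_cancel₀ x (ne_of_gt hΔn)] at this
          have e2 : x - Δ n < (⌊x / Δ n⌋ : ℝ) * Δ n := by
            have := mul_lt_mul_of_pos_right h2 hΔn
            rw [sub_mul, one_mul, div_mul_cancel₀ x (ne_of_gt hΔn)] at this
            linarith
          have ho1 := hoff1 n
          have ho2 := hoff2 n
          rw [Real.norm_eq_abs, abs_le]
          constructor
          · nlinarith [ho2, e2, ho1, hΔn]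
          · nlinarith [ho2, e1, ho1, hΔn]
        · simpa using hΔ0.const_mul 2
      have := hdiff.add_const x
      simpa using this
  have := (hterm1.add hterm2)
  rw [add_zero] at this
  exact this.const_mul (1 / c)

lemma aux_div (q : ℕ) (hq : 0 < q) (M r i : ℕ) (hr : r < q) :
    i < (M + q - 1 - r) / q ↔ q * i + r < M := by
  rw [Nat.lt_iff_add_one_le, Nat.le_div_iff_mul_le hq, add_mul, one_mul, mul_comm i q]
  omega

lemma sum_residues (q : ℕ) (hq : 0 < q) (M : ℕ) (F : ℕ → ℝ) :
    ∑ j ∈ Finset.range M, F j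
      = ∑ r ∈ Finset.range q, ∑ i ∈ Finset.range ((M + q - 1 - r) / q), F (q * i + r) := by
  rw [Finset.sum_sigma']
  refine Finset.sum_nbij' (fun j => (⟨j % q, j / q⟩ : Σ _ : ℕ, ℕ))
    (fun p => q * p.2 + p.1) ?_ ?_ ?_ ?_ ?_
  · intro j hj
    simp only [Finset.mem_range] at hj
    simp only [Finset.mem_sigma, Finset.mem_range]
    refine ⟨Nat.mod_lt _ hq, ?_⟩
    rw [aux_div q hq M _ _ (Nat.mod_lt _ hq), Nat.div_add_mod]
    exact hj
  · intro p hp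
    simp only [Finset.mem_sigma, Finset.mem_range] at hp
    simp only [Finset.mem_range]
    exact (aux_div q hq M _ _ hp.1).1 hp.2
  · intro j hj
    simp only []
    rw [Nat.div_add_mod]
  · intro p hp
    simp only [Finset.mem_sigma, Finset.mem_range] at hp
    ext
    · simp [Nat.mul_add_mod, Nat.mod_eq_of_lt hp.1]
    · simp [Nat.mul_add_div hq, Nat.div_eq_of_lt hp.1]
  · intro j hj
    simp only []
    rw [Nat.div_add_mod]

lemma sum_Icc_int (N : ℤ) (F : ℤ → ℝ) :
    ∑ j ∈ Finset.Icc (1 : ℤ) N, F j = ∑ j ∈ Finset.range N.toNat, F ((j : ℤ) + 1) := by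
  refine Finset.sum_nbij' (fun j => (j - 1).toNat) (fun i => (i : ℤ) + 1) ?_ ?_ ?_ ?_ ?_
  · intro j hj
    simp only [Finset.mem_Icc] at hj
    simp only [Finset.mem_range]
    omega
  · intro i hi
    simp only [Finset.mem_range] at hi
    simp only [Finset.mem_Icc]
    omega
  · intro j hj
    simp only [Finset.mem_Icc] at hj
    omega
  · intro i _
    omega
  · intro j hj
    simp only [Finset.mem_Icc] at hj
    congr 1
    omega

lemma sum_Icc_nat (q : ℕ) (F : ℕ → ℝ) :
    ∑ η ∈ Finset.Icc 1 q, F η = ∑ r ∈ Finset.range q, F (r + 1) := by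
  refine Finset.sum_nbij' (fun η => η - 1) (fun r => r + 1) ?_ ?_ ?_ ?_ ?_
  · intro η hη; simp only [Finset.mem_Icc] at hη; simp only [Finset.mem_range]; omega
  · intro r hr; simp only [Finset.mem_range] at hr; simp only [Finset.mem_Icc]; omega
  · intro η hη; simp only [Finset.mem_Icc] at hη; omega
  · intro r _; omega
  · intro η hη; simp only [Finset.mem_Icc] at hη; congr 1; omega


set_option maxHeartbeats 2000000 in
/-- If `L = p/q` in lowest terms, `L_n = b_n/a_n → L`, `δ_n < 0` for all `n`, and
`a_n |δ_n| → k ∈ (0,∞)`, then for every `m ∈ ℤ` and `t > 0`,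
`(1/a_n) ∑_{j=1}^{⌊a_n t⌋} f̂_{m,L}(j L_n)
  → (1/q) ∑_{η=1}^{q} (1/k) ∫_0^{kt} f̂_{m,L}(ηL - x) dx`. -/
theorem sum_tendsto_negative_delta_case (a b : ℕ → ℕ) (ha : StrictMono a) (hb : StrictMono b)
    (ha0 : ∀ n, 0 < a n) (hb0 : ∀ n, 0 < b n)
    (p q : ℕ) (hp : 0 < p) (hq : 0 < q) (hpq : Nat.Coprime p q)
    (L : ℝ) (hL : L = (p : ℝ) / (q : ℝ))
    (hconv : Tendsto (fun n => (b n : ℝ) / (a n : ℝ)) atTop (nhds L))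
    (hneg : ∀ n, (b n : ℝ) / (a n : ℝ) - L < 0)
    (k : ℝ) (hkpos : 0 < k)
    (hk : Tendsto (fun n => (a n : ℝ) * |(b n : ℝ) / (a n : ℝ) - L|) atTop (nhds k)) :
    ∀ (m : ℤ) (t : ℝ), 0 < t →
      Tendsto (fun n =>
        (1 / (a n : ℝ)) * ∑ j ∈ Finset.Icc (1 : ℤ) ⌊(a n : ℝ) * t⌋,
            fmLhat L m ((j : ℝ) * ((b n : ℝ) / (a n : ℝ))))
        atTop
        (nhds ((1 / (q : ℝ)) * ∑ η ∈ Finset.Icc 1 q,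
          (1 / k) * ∫ x in (0 : ℝ)..(k * t), fmLhat L m ((η : ℝ) * L - x))) := by
  intro m t ht
  obtain ⟨C, hC0, hC⟩ := fmLhat_bound L m
  have hq0 : (q : ℝ) ≠ 0 := Nat.cast_ne_zero.mpr hq.ne'
  have hqpos : (0:ℝ) < q := by exact_mod_cast hq
  have hApos : ∀ n, (0:ℝ) < (a n : ℝ) := fun n => by exact_mod_cast ha0 n
  have hAtop : Tendsto (fun n => (a n : ℝ)) atTop atTop :=
    tendsto_natCast_atTop_atTop.comp ha.tendsto_atTop
  have hinv : Tendsto (fun n => 1 / (a n : ℝ)) atTop (nhds 0) := by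
    simpa [one_div, Function.comp_def] using tendsto_inv_atTop_zero.comp hAtop
  -- the integer error sequence
  set e : ℕ → ℤ := fun n => (p : ℤ) * (a n : ℤ) - (q : ℤ) * (b n : ℤ) with he
  have habs : ∀ n, |(b n : ℝ) / (a n : ℝ) - L| = L - (b n : ℝ) / (a n : ℝ) := by
    intro n; rw [abs_of_neg (hneg n)]; ring
  have hecast : ∀ n, ((e n : ℤ) : ℝ)
      = (q : ℝ) * ((a n : ℝ) * |(b n : ℝ) / (a n : ℝ) - L|) := by
    intro n
    rw [habs n, hL]
    have hA0 : (a n : ℝ) ≠ 0 := ne_of_gt (hApos n)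
    simp only [he]
    push_cast
    field_simp
  have hetend : Tendsto (fun n => ((e n : ℤ) : ℝ)) atTop (nhds ((q:ℝ) * k)) := by
    simp only [hecast]
    exact hk.const_mul _
  obtain ⟨n0, hn0⟩ := Metric.tendsto_atTop.1 hetend (1/2) (by norm_num)
  have heconst : ∀ n, n0 ≤ n → e n = e n0 := by
    intro n hn
    have h1 := hn0 n hn
    have h2 := hn0 n0 le_rfl
    rw [Real.dist_eq] at h1 h2
    have h3 : |((e n : ℤ):ℝ) - ((e n0 : ℤ):ℝ)| < 1 := by
      calc |((e n : ℤ):ℝ) - ((e n0 : ℤ):ℝ)|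
          ≤ |((e n : ℤ):ℝ) - (q:ℝ)*k| + |(q:ℝ)*k - ((e n0 : ℤ):ℝ)| := abs_sub_le _ _ _
        _ < 1 := by rw [abs_sub_comm ((q:ℝ)*k)] ; linarith
    have h4 : |((e n - e n0 : ℤ) : ℝ)| < 1 := by push_cast; exact h3
    have h5 : |e n - e n0| < 1 := by exact_mod_cast (by rwa [← Int.cast_abs] at h4 :
      ((|e n - e n0| : ℤ) : ℝ) < 1)
    rcases abs_lt.mp h5 with ⟨hl, hr⟩
    omega
  have hen0 : ((e n0 : ℤ) : ℝ) = (q : ℝ) * k := by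
    have h1 : Tendsto (fun _ : ℕ => ((e n0 : ℤ):ℝ)) atTop (nhds ((q:ℝ)*k)) := by
      apply hetend.congr'
      filter_upwards [eventually_ge_atTop n0] with n hn
      rw [heconst n hn]
    exact tendsto_nhds_unique tendsto_const_nhds h1
  have hen0nonneg : (0:ℤ) ≤ e n0 := by
    have : (0:ℝ) < ((e n0 : ℤ):ℝ) := by rw [hen0]; positivity
    exact_mod_cast this.le
  set cc : ℕ := (e n0).toNat with hccdef
  have hcc : (cc : ℝ) = (q : ℝ) * k := by
    rw [← hen0, hccdef]
    exact_mod_cast congrArg (Int.cast : ℤ → ℝ) (Int.toNat_of_nonneg hen0nonneg)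
  have hccpos : (0:ℝ) < (cc:ℝ) := by rw [hcc]; positivity
  have hcc0 : (cc:ℝ) ≠ 0 := ne_of_gt hccpos
  -- the exact formula for b n / a n for n ≥ n0
  have hLn : ∀ n, n0 ≤ n →
      (b n : ℝ) / (a n : ℝ) = L - (cc : ℝ) / ((q:ℝ) * (a n : ℝ)) := by
    intro n hn
    have hA0 : (a n : ℝ) ≠ 0 := ne_of_gt (hApos n)
    have h1 : ((e n : ℤ) : ℝ) = (cc : ℝ) := by
      rw [heconst n hn, hen0, hcc]
    have key : (p:ℝ) * (a n : ℝ) - (q:ℝ) * (b n : ℝ) = (cc:ℝ) := by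
      rw [← h1]; simp only [he]; push_cast; ring
    have hqb : (q:ℝ) * (b n:ℝ) = (p:ℝ)*(a n:ℝ) - (cc:ℝ) := by linarith [key]
    calc (b n : ℝ)/(a n:ℝ)
        = ((q:ℝ)*(b n:ℝ))/((q:ℝ)*(a n:ℝ)) := (mul_div_mul_left _ _ hq0).symm
      _ = ((p:ℝ)*(a n:ℝ) - (cc:ℝ))/((q:ℝ)*(a n:ℝ)) := by rw [hqb]
      _ = ((p:ℝ)*(a n:ℝ))/((q:ℝ)*(a n:ℝ)) - (cc:ℝ)/((q:ℝ)*(a n:ℝ)) := by rw [sub_div]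
      _ = L - (cc:ℝ)/((q:ℝ)*(a n:ℝ)) := by
          rw [hL, mul_comm (q:ℝ) (a n:ℝ), mul_comm (p:ℝ) (a n:ℝ), mul_div_mul_left _ _ hA0]
  -- floor bounds
  have hNbound : ∀ n, ((a n:ℝ)*t - 1 < (((⌊(a n : ℝ) * t⌋).toNat : ℕ):ℝ)) ∧
      ((((⌊(a n : ℝ) * t⌋).toNat : ℕ):ℝ) ≤ (a n:ℝ)*t) := by
    intro n
    have hpos : (0:ℝ) ≤ (a n:ℝ)*t := by positivity
    have h0 : (0:ℤ) ≤ ⌊(a n:ℝ)*t⌋ := Int.floor_nonneg.mpr hpos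
    have hcast : (((⌊(a n:ℝ)*t⌋).toNat : ℕ):ℝ) = ((⌊(a n:ℝ)*t⌋ : ℤ):ℝ) := by
      exact_mod_cast congrArg (Int.cast : ℤ → ℝ) (Int.toNat_of_nonneg h0)
    constructor
    · rw [hcast]; linarith [Int.sub_one_lt_floor ((a n:ℝ)*t)]
    · rw [hcast]; exact Int.floor_le _
  -- main limit for each residue
  have hlim : Tendsto (fun n => ∑ r ∈ Finset.range q, (1/(a n:ℝ)) *
      ∑ i ∈ Finset.range ((((⌊(a n : ℝ) * t⌋).toNat) + q - 1 - r) / q),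
        fmLhat L m (((r:ℝ)+1) * L
          - ((i:ℝ) * ((cc:ℝ)/(a n:ℝ)) + ((r:ℝ)+1) * (cc:ℝ) / ((q:ℝ) * (a n:ℝ))))) atTop
      (nhds (∑ r ∈ Finset.range q, (1/(cc:ℝ)) *
        ∫ x in (0:ℝ)..(k*t), fmLhat L m (((r:ℝ)+1) * L - x))) := by
    apply tendsto_finset_sum
    intro r hr
    simp only [Finset.mem_range] at hr
    have hrq : (r:ℝ) + 1 ≤ (q:ℝ) := by exact_mod_cast hr
    have hmeasr : Measurable (fun x => fmLhat L m (((r:ℝ)+1) * L - x)) :=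
      (meas_fmLhat L m).comp (measurable_const.sub measurable_id)
    have hcontr : ∀ᵐ x : ℝ, ContinuousAt (fun x => fmLhat L m (((r:ℝ)+1) * L - x)) x := by
      rw [MeasureTheory.ae_iff]
      refine measure_mono_null (fun x hx => ?_)
        ((Set.countable_range (fun z : ℤ => ((r:ℝ)+1)*L - (z:ℝ))).measure_zero _)
      simp only [Set.mem_setOf_eq] at hx
      by_contra hxr
      apply hx
      have hfr : Int.fract (((r:ℝ)+1)*L - x) ≠ 0 := by
        intro h0
        apply hxr
        rw [Int.fract] at h0
        exact ⟨⌊((r:ℝ)+1)*L - x⌋, by dsimp only; linarith⟩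
      exact (contAt_fmLhat L m _ hfr).comp
        ((continuous_const.sub continuous_id).continuousAt)
    have hMlim : Tendsto (fun n =>
        (((((⌊(a n : ℝ) * t⌋).toNat) + q - 1 - r) / q : ℕ) : ℝ) * ((cc:ℝ)/(a n:ℝ)))
        atTop (nhds (k*t)) := by
      have hktcc : t*(cc:ℝ)/(q:ℝ) = k*t := by rw [hcc]; field_simp
      rw [← hktcc]
      have hlow : Tendsto (fun n : ℕ => t*(cc:ℝ)/(q:ℝ)
          - ((1+(q:ℝ))*(cc:ℝ)/(q:ℝ)) * (1/(a n:ℝ))) atTop (nhds (t*(cc:ℝ)/(q:ℝ))) := by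
        have h2 := hinv.const_mul ((1+(q:ℝ))*(cc:ℝ)/(q:ℝ))
        have h3 := (tendsto_const_nhds :
          Tendsto (fun _ : ℕ => t*(cc:ℝ)/(q:ℝ)) atTop (nhds (t*(cc:ℝ)/(q:ℝ)))).sub h2
        simpa using h3
      have hup : Tendsto (fun n : ℕ => t*(cc:ℝ)/(q:ℝ)
          + ((q:ℝ)*(cc:ℝ)/(q:ℝ)) * (1/(a n:ℝ))) atTop (nhds (t*(cc:ℝ)/(q:ℝ))) := by
        have h2 := hinv.const_mul ((q:ℝ)*(cc:ℝ)/(q:ℝ))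
        have h3 := (tendsto_const_nhds :
          Tendsto (fun _ : ℕ => t*(cc:ℝ)/(q:ℝ)) atTop (nhds (t*(cc:ℝ)/(q:ℝ)))).add h2
        simpa using h3
      apply tendsto_of_tendsto_of_tendsto_of_le_of_le hlow hup
      · intro n
        dsimp only
        have hA0 : (a n : ℝ) ≠ 0 := ne_of_gt (hApos n)
        obtain ⟨hN1, hN2⟩ := hNbound n
        set Nn : ℕ := (⌊(a n : ℝ) * t⌋).toNat with hNn
        obtain ⟨s, hs, hKey⟩ : ∃ s, s < q ∧ q * ((Nn + q - 1 - r) / q) + s = Nn + q - 1 - r :=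
          ⟨_, Nat.mod_lt _ hq, Nat.div_add_mod _ _⟩
        set K : ℕ := q * ((Nn + q - 1 - r) / q) with hK
        have hKb : Nn ≤ K + q ∧ K ≤ Nn + q := by omega
        have hKlow : ((Nn:ℕ):ℝ) - (q:ℝ) ≤ ((K:ℕ):ℝ) := by
          have h' : ((Nn:ℕ):ℝ) ≤ ((K:ℕ):ℝ) + (q:ℝ) := by exact_mod_cast hKb.1
          linarith
        have hmid : ((((Nn + q - 1 - r) / q : ℕ)) : ℝ) * ((cc:ℝ)/(a n:ℝ))
            = ((K:ℕ):ℝ) * (cc:ℝ) / ((q:ℝ) * (a n:ℝ)) := by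
          rw [hK]; push_cast; field_simp
        rw [hmid]
        have hlower : t*(cc:ℝ)/(q:ℝ) - ((1+(q:ℝ))*(cc:ℝ)/(q:ℝ)) * (1/(a n:ℝ))
            = (((a n:ℝ)*t - (1+(q:ℝ)))*(cc:ℝ)) / ((q:ℝ) * (a n:ℝ)) := by
          field_simp
        rw [hlower]
        gcongr
        · linarith
      · intro n
        dsimp only
        have hA0 : (a n : ℝ) ≠ 0 := ne_of_gt (hApos n)
        obtain ⟨hN1, hN2⟩ := hNbound n
        set Nn : ℕ := (⌊(a n : ℝ) * t⌋).toNat with hNn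
        obtain ⟨s, hs, hKey⟩ : ∃ s, s < q ∧ q * ((Nn + q - 1 - r) / q) + s = Nn + q - 1 - r :=
          ⟨_, Nat.mod_lt _ hq, Nat.div_add_mod _ _⟩
        set K : ℕ := q * ((Nn + q - 1 - r) / q) with hK
        have hKb : Nn ≤ K + q ∧ K ≤ Nn + q := by omega
        have hKup : ((K:ℕ):ℝ) ≤ ((Nn:ℕ):ℝ) + (q:ℝ) := by exact_mod_cast hKb.2
        have hmid : ((((Nn + q - 1 - r) / q : ℕ)) : ℝ) * ((cc:ℝ)/(a n:ℝ))
            = ((K:ℕ):ℝ) * (cc:ℝ) / ((q:ℝ) * (a n:ℝ)) := by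
          rw [hK]; push_cast; field_simp
        rw [hmid]
        have hupper : t*(cc:ℝ)/(q:ℝ) + ((q:ℝ)*(cc:ℝ)/(q:ℝ)) * (1/(a n:ℝ))
            = (((a n:ℝ)*t + (q:ℝ))*(cc:ℝ)) / ((q:ℝ) * (a n:ℝ)) := by
          field_simp
        rw [hupper]
        gcongr
        · linarith
    exact riemann_lim _ hmeasr C (fun x => hC _) hcontr _ hAtop hApos _ hccpos
      _ (fun n => by positivity)
      (fun n => by
        rw [div_le_div_iff₀ (mul_pos hqpos (hApos n)) (hApos n)]
        nlinarith [mul_le_mul_of_nonneg_right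
          (mul_le_mul_of_nonneg_right hrq hccpos.le) (hApos n).le])
      _ _ hMlim
  -- identify the limit value with the stated one
  have htarget : (1 / (q : ℝ)) * ∑ η ∈ Finset.Icc 1 q,
      (1 / k) * ∫ x in (0:ℝ)..(k * t), fmLhat L m ((η : ℝ) * L - x)
      = ∑ r ∈ Finset.range q, (1/(cc:ℝ)) *
        ∫ x in (0:ℝ)..(k*t), fmLhat L m (((r:ℝ)+1) * L - x) := by
    rw [Finset.mul_sum]
    rw [sum_Icc_nat q (fun η => (1/(q:ℝ)) *
      ((1/k) * ∫ x in (0:ℝ)..(k*t), fmLhat L m ((η:ℝ)*L - x)))]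
    apply Finset.sum_congr rfl
    intro r _
    push_cast
    rw [hcc]
    ring
  rw [htarget]
  refine Tendsto.congr' ?_ hlim
  filter_upwards [eventually_ge_atTop n0] with n hn
  have hA0 : (a n : ℝ) ≠ 0 := ne_of_gt (hApos n)
  have e1 : ∑ j ∈ Finset.Icc (1:ℤ) ⌊(a n:ℝ)*t⌋, fmLhat L m ((j:ℝ) * ((b n:ℝ)/(a n:ℝ)))
      = ∑ j ∈ Finset.range ((⌊(a n:ℝ)*t⌋).toNat),
          fmLhat L m ((((j:ℕ):ℝ)+1) * ((b n:ℝ)/(a n:ℝ))) := by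
    rw [sum_Icc_int ⌊(a n:ℝ)*t⌋ (fun j => fmLhat L m ((j:ℝ) * ((b n:ℝ)/(a n:ℝ))))]
    apply Finset.sum_congr rfl
    intro j _
    push_cast
    ring_nf
  have e2 : ∑ j ∈ Finset.range ((⌊(a n:ℝ)*t⌋).toNat),
          fmLhat L m ((((j:ℕ):ℝ)+1) * ((b n:ℝ)/(a n:ℝ)))
      = ∑ r ∈ Finset.range q,
          ∑ i ∈ Finset.range (((⌊(a n:ℝ)*t⌋).toNat + q - 1 - r)/q),
            fmLhat L m ((((q*i+r : ℕ):ℝ)+1) * ((b n:ℝ)/(a n:ℝ))) :=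
    sum_residues q hq _ (fun j => fmLhat L m (((j:ℝ)+1) * ((b n:ℝ)/(a n:ℝ))))
  have e3 : ∀ r, r < q → ∀ i : ℕ,
      fmLhat L m ((((q*i+r : ℕ):ℝ)+1) * ((b n:ℝ)/(a n:ℝ)))
        = fmLhat L m (((r:ℝ)+1) * L
            - ((i:ℝ) * ((cc:ℝ)/(a n:ℝ)) + ((r:ℝ)+1)*(cc:ℝ)/((q:ℝ)*(a n:ℝ)))) := by
    intro r hr i
    have harg : (((q*i+r : ℕ):ℝ)+1) * ((b n:ℝ)/(a n:ℝ))
        = (((r:ℝ)+1) * L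
            - ((i:ℝ) * ((cc:ℝ)/(a n:ℝ)) + ((r:ℝ)+1)*(cc:ℝ)/((q:ℝ)*(a n:ℝ))))
          + (((i*p : ℕ):ℤ):ℝ) := by
      rw [hLn n hn, hL]
      push_cast
      field_simp
      ring
    rw [harg, fmLhat_int_add]
  rw [e1, e2, Finset.mul_sum]
  apply Finset.sum_congr rfl
  intro r hrq
  simp only [Finset.mem_range] at hrq
  congr 1
  apply Finset.sum_congr rfl
  intro i _
  exact (e3 r hrq i).symm
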